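/- Let η > 0, 0 ≤ ϖ₁ < ϖ₂, and define g: ℝ → ℝ by g(x) = 0 for x < ϖ₁, g(x) = ηx for ϖ₁ ≤ x < ϖ₂, and g(x) = ηϖ₂ for x ≥ ϖ₂. Let m > 0, a > 0, ϕ > 0, and let V be a Gamma-distributed random variable with shape m and mean a, i.e., with density f(v) = ((m/a)^m/Γ(m))·v^{m−1}·e^{−mv/a} on v ≥ 0. Then E[g(ϕV)] = (η/Γ(m))·[(ϕa/m)·(Γ(m+1, mϖ₁/(ϕa)) − Γ(m+1, mϖ₂/(ϕa))) + ϖ₂·Γ(m, mϖ₂/(ϕa))], where Γ(a, x) = ∫_x^∞ t^{a−1} e^{−t} dt is the upper incomplete gamma function and Γ(m) = Γ(m, 0). -/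

import Mathlib

open MeasureTheory Real

open Set in
/-- The upper incomplete gamma function `Γ(a, x) = ∫_x^∞ t^{a−1} e^{−t} dt`. -/
noncomputable def upperGamma (a x : ℝ) : ℝ :=
  ∫ t in Set.Ioi x, t ^ (a - 1) * Real.exp (-t)

open Set in
lemma integ_pow_exp {p : ℝ} (hp : 0 < p) {x : ℝ} (hx : 0 ≤ x) :
    IntegrableOn (fun t : ℝ => t ^ (p - 1) * Real.exp (-t)) (Set.Ioi x) := by
  have h := Real.GammaIntegral_convergent hp
  have h2 : IntegrableOn (fun t : ℝ => t ^ (p - 1) * Real.exp (-t)) (Set.Ioi 0) :=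
    h.congr_fun (fun t _ => mul_comm _ _) measurableSet_Ioi
  exact h2.mono_set (Set.Ioi_subset_Ioi hx)

open Set in
/-- With `g` the sensitivity/saturation EH transfer function and `V`
Gamma-distributed with shape `m` and mean `a` (density
`((m/a)^m/Γ(m)) v^{m−1} e^{−mv/a}` on `v ≥ 0`), for `ϕ > 0`,
`E[g(ϕV)] = (η/Γ(m))[(ϕa/m)(Γ(m+1, mϖ₁/(ϕa)) − Γ(m+1, mϖ₂/(ϕa))) + ϖ₂Γ(m, mϖ₂/(ϕa))]`. -/
theorem mean_g_gamma (η ϖ₁ ϖ₂ : ℝ) (hη : 0 < η) (h1 : 0 ≤ ϖ₁) (h12 : ϖ₁ < ϖ₂)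
    (g : ℝ → ℝ)
    (hg : ∀ x, g x = if x < ϖ₁ then 0 else if x < ϖ₂ then η * x else η * ϖ₂)
    (m a ϕ : ℝ) (hm : 0 < m) (ha : 0 < a) (hϕ : 0 < ϕ) :
    ∫ v in Set.Ioi (0 : ℝ),
        g (ϕ * v) * ((m / a) ^ m / Real.Gamma m * v ^ (m - 1) * Real.exp (-(m * v / a)))
      = (η / Real.Gamma m)
        * ((ϕ * a / m) * (upperGamma (m + 1) (m * ϖ₁ / (ϕ * a))
            - upperGamma (m + 1) (m * ϖ₂ / (ϕ * a)))
          + ϖ₂ * upperGamma m (m * ϖ₂ / (ϕ * a))) := by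
  have h2 : 0 < ϖ₂ := h1.trans_lt h12
  set b : ℝ := ϕ * a / m with hb
  set c : ℝ := m / a with hc
  have hbpos : 0 < b := by positivity
  have hcpos : 0 < c := by positivity
  set x₁ : ℝ := m * ϖ₁ / (ϕ * a) with hx1def
  set x₂ : ℝ := m * ϖ₂ / (ϕ * a) with hx2def
  have hbx1 : b * x₁ = ϖ₁ := by rw [hb, hx1def]; field_simp
  have hbx2 : b * x₂ = ϖ₂ := by rw [hb, hx2def]; field_simp
  have hx1 : 0 ≤ x₁ := by rw [hx1def]; positivity
  have hx2pos : 0 < x₂ := by rw [hx2def]; positivity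
  have hx12 : x₁ < x₂ := by
    rw [hx1def, hx2def, div_lt_div_iff_of_pos_right (by positivity)]
    exact mul_lt_mul_of_pos_left h12 hm
  -- measurability and boundedness of g
  have hgm : Measurable g := by
    have hgeq : g = fun x => if x < ϖ₁ then 0 else if x < ϖ₂ then η * x else η * ϖ₂ :=
      funext hg
    rw [hgeq]
    exact Measurable.ite measurableSet_Iio measurable_const
      (Measurable.ite measurableSet_Iio (measurable_const.mul measurable_id) measurable_const)
  have hgbd : ∀ x : ℝ, |g x| ≤ η * ϖ₂ := by
    intro x
    rw [hg x]
    split_ifs with hA hB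
    · rw [abs_zero]; positivity
    · have hx0 : ϖ₁ ≤ x := not_lt.mp hA
      rw [abs_of_nonneg (by nlinarith : (0:ℝ) ≤ η * x)]
      nlinarith
    · rw [abs_of_nonneg (by positivity)]
  -- the reduced integrand
  set f : ℝ → ℝ := fun t => g (b * t) * (t ^ (m - 1) * Real.exp (-t)) with hf
  have hfaem : AEStronglyMeasurable f (volume.restrict (Ioi (0:ℝ))) := by
    rw [hf]
    exact ((hgm.comp (measurable_const_mul b)).aestronglyMeasurable).mul
      (integ_pow_exp hm le_rfl).aestronglyMeasurable
  have hfint : IntegrableOn f (Ioi (0:ℝ)) := by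
    apply Integrable.mono' ((integ_pow_exp hm le_rfl).const_mul (η * ϖ₂)) hfaem
    filter_upwards [ae_restrict_mem measurableSet_Ioi] with t ht
    have ht0 : (0:ℝ) < t := ht
    have hnn : (0:ℝ) ≤ t ^ (m - 1) * Real.exp (-t) := by positivity
    calc ‖f t‖ = |g (b * t)| * (t ^ (m - 1) * Real.exp (-t)) := by
          rw [hf]; rw [Real.norm_eq_abs, abs_mul, abs_of_nonneg hnn]
      _ ≤ η * ϖ₂ * (t ^ (m - 1) * Real.exp (-t)) :=
          mul_le_mul_of_nonneg_right (hgbd _) hnn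
  -- values of f on the pieces
  have hval1 : EqOn f (fun _ => (0:ℝ)) (Ioo 0 x₁) := by
    intro t ht
    have hlt : b * t < ϖ₁ := by rw [← hbx1]; exact mul_lt_mul_of_pos_left ht.2 hbpos
    simp only [hf]; rw [hg (b * t), if_pos hlt, zero_mul]
  have hval2 : EqOn f (fun t => (η * b) * (t ^ m * Real.exp (-t))) (Ioc x₁ x₂) := by
    intro t ht
    have ht1 : ϖ₁ < b * t := by rw [← hbx1]; exact mul_lt_mul_of_pos_left ht.1 hbpos
    have ht2 : b * t ≤ ϖ₂ := by rw [← hbx2]; exact mul_le_mul_of_nonneg_left ht.2 hbpos.le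
    have htpos : 0 < t := lt_of_le_of_lt hx1 ht.1
    have hgv : g (b * t) = η * (b * t) := by
      rw [hg (b * t), if_neg (not_lt.mpr ht1.le)]
      by_cases hlt : b * t < ϖ₂
      · rw [if_pos hlt]
      · rw [if_neg hlt, le_antisymm ht2 (not_lt.mp hlt)]
    have hpow : t ^ m = t ^ (m - 1) * t := by
      conv_lhs => rw [show m = (m - 1) + 1 by ring]
      exact Real.rpow_add_one htpos.ne' (m - 1)
    simp only [hf]; rw [hgv, hpow]; ring
  have hval3 : EqOn f (fun t => (η * ϖ₂) * (t ^ (m - 1) * Real.exp (-t))) (Ioi x₂) := by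
    intro t ht
    have hlt : ϖ₂ < b * t := by rw [← hbx2]; exact mul_lt_mul_of_pos_left ht hbpos
    have hgv : g (b * t) = η * ϖ₂ := by
      rw [hg (b * t), if_neg (not_lt.mpr (by linarith)), if_neg (not_lt.mpr hlt.le)]
    simp only [hf]; rw [hgv]
  -- upper gamma with exponent m+1
  have hugm1 : ∀ x : ℝ, upperGamma (m + 1) x = ∫ t in Ioi x, t ^ m * Real.exp (-t) := by
    intro x; unfold upperGamma; simp only [add_sub_cancel_right]
  have hintm : ∀ x : ℝ, 0 ≤ x → IntegrableOn (fun t : ℝ => t ^ m * Real.exp (-t)) (Ioi x) := by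
    intro x hx
    have := integ_pow_exp (p := m + 1) (by linarith) hx
    simpa using this
  have hsplit2 : ∫ t in Ioi x₁, t ^ m * Real.exp (-t)
      = (∫ t in Ioc x₁ x₂, t ^ m * Real.exp (-t)) + ∫ t in Ioi x₂, t ^ m * Real.exp (-t) := by
    rw [← Ioc_union_Ioi_eq_Ioi hx12.le,
      setIntegral_union (Ioc_disjoint_Ioi le_rfl) measurableSet_Ioi
        (((hintm x₁ hx1)).mono_set Ioc_subset_Ioi_self) (hintm x₂ hx2pos.le)]
  -- compute the reduced integral
  have hJ : ∫ t in Ioi (0:ℝ), f t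
      = (η * b) * (upperGamma (m + 1) x₁ - upperGamma (m + 1) x₂)
        + (η * ϖ₂) * upperGamma m x₂ := by
    rw [← Ioc_union_Ioi_eq_Ioi hx2pos.le,
      setIntegral_union (Ioc_disjoint_Ioi le_rfl) measurableSet_Ioi
        (hfint.mono_set Ioc_subset_Ioi_self) (hfint.mono_set (Ioi_subset_Ioi hx2pos.le)),
      ← Ioc_union_Ioc_eq_Ioc hx1 hx12.le,
      setIntegral_union (Ioc_disjoint_Ioc_of_le le_rfl) measurableSet_Ioc
        (hfint.mono_set Ioc_subset_Ioi_self)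
        (hfint.mono_set (Ioc_subset_Ioi_self.trans (Ioi_subset_Ioi hx1)))]
    have e1 : ∫ t in Ioc (0:ℝ) x₁, f t = 0 := by
      rw [integral_Ioc_eq_integral_Ioo, setIntegral_congr_fun measurableSet_Ioo hval1]
      simp
    have e2 : ∫ t in Ioc x₁ x₂, f t
        = (η * b) * (upperGamma (m + 1) x₁ - upperGamma (m + 1) x₂) := by
      rw [setIntegral_congr_fun measurableSet_Ioc hval2, integral_const_mul,
        hugm1 x₁, hugm1 x₂, hsplit2]
      ring
    have e3 : ∫ t in Ioi x₂, f t = (η * ϖ₂) * upperGamma m x₂ := by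
      rw [setIntegral_congr_fun measurableSet_Ioi hval3, integral_const_mul]
      rfl
    rw [e1, e2, e3]; ring
  -- substitution
  set F : ℝ → ℝ := fun t => g (b * t) * (((a / m) * t) ^ (m - 1) * Real.exp (-t)) with hF
  have hsub : ∫ v in Ioi (0:ℝ),
      g (ϕ * v) * (c ^ m / Real.Gamma m * v ^ (m - 1) * Real.exp (-(m * v / a)))
      = (c ^ m / Real.Gamma m) * ∫ v in Ioi (0:ℝ), F (c * v) := by
    rw [← integral_const_mul]
    apply setIntegral_congr_fun measurableSet_Ioi
    intro v _
    have e1 : b * (c * v) = ϕ * v := by rw [hb, hc]; field_simp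
    have e2 : (a / m) * (c * v) = v := by rw [hc]; field_simp
    have e3 : c * v = m * v / a := by rw [hc]; ring
    simp only [hF]
    rw [e1, e2, e3]
    ring
  have hsub2 : ∫ v in Ioi (0:ℝ), F (c * v) = c⁻¹ * ∫ t in Ioi (0:ℝ), F t := by
    have := integral_comp_mul_left_Ioi F 0 hcpos
    simpa [mul_zero] using this
  have hsub3 : ∫ t in Ioi (0:ℝ), F t = (a / m) ^ (m - 1) * ∫ t in Ioi (0:ℝ), f t := by
    rw [← integral_const_mul]
    apply setIntegral_congr_fun measurableSet_Ioi
    intro t ht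
    have hmr : ((a / m) * t) ^ (m - 1) = (a / m) ^ (m - 1) * t ^ (m - 1) :=
      Real.mul_rpow (by positivity) (le_of_lt ht)
    simp only [hF, hf]
    rw [hmr]; ring
  have hconst : c ^ m / Real.Gamma m * c⁻¹ * (a / m) ^ (m - 1) = 1 / Real.Gamma m := by
    have h1 : c⁻¹ = a / m := by rw [hc, inv_div]
    have h2' : (a / m) ^ m = (a / m) ^ (m - 1) * (a / m) := by
      have h := Real.rpow_add_one (by positivity : (a / m : ℝ) ≠ 0) (m - 1)
      rw [show m - 1 + 1 = m by ring] at h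
      exact h
    have h3 : c ^ m * (a / m) ^ m = 1 := by
      rw [hc, ← Real.mul_rpow (by positivity) (by positivity),
        show (m / a) * (a / m) = 1 by field_simp, Real.one_rpow]
    calc c ^ m / Real.Gamma m * c⁻¹ * (a / m) ^ (m - 1)
        = (c ^ m * ((a / m) ^ (m - 1) * (a / m))) / Real.Gamma m := by rw [h1]; ring
      _ = (c ^ m * (a / m) ^ m) / Real.Gamma m := by rw [← h2']
      _ = 1 / Real.Gamma m := by rw [h3]
  rw [hsub, hsub2, hsub3, hJ,
    show ∀ X : ℝ, c ^ m / Real.Gamma m * (c⁻¹ * ((a / m) ^ (m - 1) * X))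
        = c ^ m / Real.Gamma m * c⁻¹ * (a / m) ^ (m - 1) * X from fun X => by ring,
    hconst]
  ring
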